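/- Let (k,l) belong to the class PC and let μ > 0. Let s_μ : (0,∞) → ℝ be a nonnegative, nonincreasing, measurable, locally integrable function satisfying the Volterra equation s_μ(t) + μ·(l ∗ s_μ)(t) = 1 for all t > 0. Then for almost every t > 0 one has k(t)/(k(t)+μ) ≤ s_μ(t) ≤ 1/(1 + μ·∫_0^t l(τ) dτ); when k(t) > 0 the lower bound can equivalently be written 1/(1 + μ·k(t)^{-1}) ≤ s_μ(t). -/

import Mathlib

open MeasureTheory Set
open scoped ENNReal

lemma lint_reflect (f : ℝ → ℝ≥0∞) (c a b : ℝ) :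
    ∫⁻ x in Ioo a b, f (c - x) = ∫⁻ x in Ioo (c - b) (c - a), f x := by
  have hmp : MeasurePreserving (fun x : ℝ => c - x) volume volume :=
    Measure.measurePreserving_sub_left volume c
  have hemb : MeasurableEmbedding (fun x : ℝ => c - x) :=
    (MeasurableEquiv.subLeft c).measurableEmbedding
  have hpre : (fun x : ℝ => c - x) ⁻¹' Ioo (c - b) (c - a) = Ioo a b := by
    ext x
    simp only [mem_preimage, mem_Ioo]
    constructor
    · rintro ⟨h1, h2⟩; exact ⟨by linarith, by linarith⟩
    · rintro ⟨h1, h2⟩; exact ⟨by linarith, by linarith⟩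
  rw [← hpre]
  exact hmp.setLIntegral_comp_preimage_emb hemb f _

lemma lint_translate (f : ℝ → ℝ≥0∞) (c a b : ℝ) :
    ∫⁻ x in Ioo a b, f (x - c) = ∫⁻ x in Ioo (a - c) (b - c), f x := by
  have hmp : MeasurePreserving (fun x : ℝ => x - c) volume volume :=
    measurePreserving_sub_right volume c
  have hemb : MeasurableEmbedding (fun x : ℝ => x - c) :=
    (MeasurableEquiv.subRight c).measurableEmbedding
  have hpre : (fun x : ℝ => x - c) ⁻¹' Ioo (a - c) (b - c) = Ioo a b := by
    ext x
    simp only [mem_preimage, mem_Ioo]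
    constructor
    · rintro ⟨h1, h2⟩; exact ⟨by linarith, by linarith⟩
    · rintro ⟨h1, h2⟩; exact ⟨by linarith, by linarith⟩
  rw [← hpre]
  exact hmp.setLIntegral_comp_preimage_emb hemb f _

lemma swap_inner (f g h : ℝ → ℝ≥0∞) (hf : Measurable f) (hg : Measurable g)
    (hh : Measurable h) (t : ℝ) :
    ∫⁻ τ in Ioo 0 t, f τ * ∫⁻ σ in Ioo 0 τ, g (τ - σ) * h σ
      = ∫⁻ σ in Ioo 0 t, h σ * ∫⁻ τ in Ioo σ t, f τ * g (τ - σ) := by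
  set H : ℝ × ℝ → ℝ≥0∞ := fun p => if p.2 < p.1 then f p.1 * (g (p.1 - p.2) * h p.2) else 0
    with hH
  have hHmeas : Measurable H := by
    apply Measurable.ite (measurableSet_lt measurable_snd measurable_fst)
    · exact (hf.comp measurable_fst).mul
        ((hg.comp (measurable_fst.sub measurable_snd)).mul (hh.comp measurable_snd))
    · exact measurable_const
  have step1 : ∀ τ ∈ Ioo (0:ℝ) t,
      f τ * ∫⁻ σ in Ioo 0 τ, g (τ - σ) * h σ = ∫⁻ σ in Ioo 0 t, H (τ, σ) := by
    intro τ hτ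
    have h1 : (fun σ => H (τ, σ)) = (Iio τ).indicator (fun σ => f τ * (g (τ - σ) * h σ)) := by
      funext σ
      simp only [hH, Set.indicator_apply, mem_Iio]
    rw [h1, lintegral_indicator measurableSet_Iio,
      Measure.restrict_restrict measurableSet_Iio]
    have h2 : Iio τ ∩ Ioo 0 t = Ioo 0 τ := by
      ext x
      simp only [mem_inter_iff, mem_Iio, mem_Ioo]
      exact ⟨fun ⟨h1', h2', h3'⟩ => ⟨h2', h1'⟩,
        fun ⟨h1', h2'⟩ => ⟨h2', h1', lt_trans h2' hτ.2⟩⟩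
    rw [h2]
    exact (lintegral_const_mul (f τ) (show Measurable fun σ : ℝ => g (τ - σ) * h σ from
      ((hg.comp (measurable_const.sub measurable_id)).mul hh))).symm
  have step2 : ∀ σ ∈ Ioo (0:ℝ) t,
      h σ * ∫⁻ τ in Ioo σ t, f τ * g (τ - σ) = ∫⁻ τ in Ioo 0 t, H (τ, σ) := by
    intro σ hσ
    have h1 : (fun τ => H (τ, σ)) = (Ioi σ).indicator (fun τ => f τ * (g (τ - σ) * h σ)) := by
      funext τ
      simp only [hH, Set.indicator_apply, mem_Ioi]
    rw [h1, lintegral_indicator measurableSet_Ioi,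
      Measure.restrict_restrict measurableSet_Ioi]
    have h2 : Ioi σ ∩ Ioo 0 t = Ioo σ t := by
      ext x
      simp only [mem_inter_iff, mem_Ioi, mem_Ioo]
      exact ⟨fun ⟨h1', _, h3'⟩ => ⟨h1', h3'⟩,
        fun ⟨h1', h2'⟩ => ⟨h1', lt_trans hσ.1 h1', h2'⟩⟩
    rw [h2]
    have h3 : ∀ τ, f τ * (g (τ - σ) * h σ) = h σ * (f τ * g (τ - σ)) := fun τ => by ring
    simp_rw [h3]
    exact (lintegral_const_mul (h σ) (show Measurable fun τ : ℝ => f τ * g (τ - σ) from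
      (hf.mul (hg.comp (measurable_id.sub measurable_const))))).symm
  calc ∫⁻ τ in Ioo 0 t, f τ * ∫⁻ σ in Ioo 0 τ, g (τ - σ) * h σ
      = ∫⁻ τ in Ioo 0 t, ∫⁻ σ in Ioo 0 t, H (τ, σ) :=
        setLIntegral_congr_fun measurableSet_Ioo step1
    _ = ∫⁻ σ in Ioo 0 t, ∫⁻ τ in Ioo 0 t, H (τ, σ) :=
        lintegral_lintegral_swap hHmeas.aemeasurable
    _ = ∫⁻ σ in Ioo 0 t, h σ * ∫⁻ τ in Ioo σ t, f τ * g (τ - σ) :=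
        (setLIntegral_congr_fun measurableSet_Ioo step2).symm

lemma integrableOn_of_lint {f : ℝ → ℝ} (hm : AEStronglyMeasurable f (volume.restrict S))
    (hnn : ∀ᵐ x ∂(volume.restrict S), 0 ≤ f x)
    (hfin : ∫⁻ x in S, ENNReal.ofReal (f x) ≠ ⊤) : IntegrableOn f S := by
  refine ⟨hm, ?_⟩
  rw [hasFiniteIntegral_iff_ofReal hnn]
  exact lt_top_iff_ne_top.mpr hfin

lemma conv_finiteness (f g : ℝ → ℝ≥0∞) (hf : Measurable f) (hg : Measurable g)
    (hA : ∀ t : ℝ, 0 < t → ∫⁻ σ in Ioo 0 t, f (t - σ) * g σ = 1) :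
    ∀ u : ℝ, 0 < u → ∫⁻ x in Ioo 0 u, f x ≠ ⊤ := by
  intro u hu
  by_contra hK
  set t := u + 1 with ht
  have htpos : (0:ℝ) < t := by linarith
  have hswap := swap_inner (fun _ => 1) f g measurable_const hf hg t
  have hLHS : ∫⁻ τ in Ioo (0:ℝ) t, (fun _ => (1:ℝ≥0∞)) τ * ∫⁻ σ in Ioo 0 τ, f (τ - σ) * g σ
      = ENNReal.ofReal t := by
    have : ∀ τ ∈ Ioo (0:ℝ) t,
        (fun _ => (1:ℝ≥0∞)) τ * (∫⁻ σ in Ioo 0 τ, f (τ - σ) * g σ) = 1 := by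
      intro τ hτ
      rw [one_mul, hA τ hτ.1]
    rw [setLIntegral_congr_fun measurableSet_Ioo this]
    simp [Real.volume_Ioo, htpos.le]
  have hSne : volume (Ioo (0:ℝ) 1 ∩ {x | g x ≠ 0}) ≠ 0 := by
    intro h0
    have h1 := hA 1 one_pos
    have h2 : ∀ᵐ σ ∂(volume.restrict (Ioo (0:ℝ) 1)), f (1 - σ) * g σ = 0 := by
      have h4 : (volume.restrict (Ioo (0:ℝ) 1)) {x | g x ≠ 0} = 0 := by
        rw [Measure.restrict_apply' measurableSet_Ioo, inter_comm]
        exact h0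
      have h3 : ∀ᵐ σ ∂(volume.restrict (Ioo (0:ℝ) 1)), g σ = 0 :=
        ae_iff.mpr (by simpa using h4)
      filter_upwards [h3] with σ hσ
      simp [hσ]
    rw [lintegral_congr_ae h2] at h1
    simp at h1
  have hRHS : ∫⁻ σ in Ioo (0:ℝ) t, g σ * ∫⁻ τ in Ioo σ t, (fun _ => (1:ℝ≥0∞)) τ * f (τ - σ)
      = ⊤ := by
    set S := Ioo (0:ℝ) 1 ∩ {x | g x ≠ 0} with hS
    have hSmeas : MeasurableSet S :=
      measurableSet_Ioo.inter (hg (measurableSet_singleton 0).compl)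
    have hsub : S ⊆ Ioo 0 t := by
      rintro x ⟨hx1, _⟩
      exact ⟨hx1.1, by have := hx1.2; linarith⟩
    refine top_le_iff.mp ?_
    calc (⊤:ℝ≥0∞) = ∫⁻ σ in S, ⊤ := by
          rw [setLIntegral_const]
          exact (ENNReal.top_mul hSne).symm
      _ = ∫⁻ σ in S, g σ * ∫⁻ τ in Ioo σ t, (fun _ => (1:ℝ≥0∞)) τ * f (τ - σ) := by
          refine setLIntegral_congr_fun hSmeas ?_
          rintro σ ⟨hσ1, hσ2⟩
          have hinner : ∫⁻ τ in Ioo σ t, (fun _ => (1:ℝ≥0∞)) τ * f (τ - σ) = ⊤ := by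
            simp only [one_mul]
            rw [lint_translate (fun x => f x) σ σ t, sub_self]
            refine top_le_iff.mp ?_
            rw [← hK]
            exact lintegral_mono_set (Ioo_subset_Ioo le_rfl (by simp [ht]; linarith [hσ1.2]))
          show ⊤ = g σ * ∫⁻ τ in Ioo σ t, (fun _ => (1:ℝ≥0∞)) τ * f (τ - σ)
          rw [hinner, ENNReal.mul_top hσ2]
      _ ≤ _ := lintegral_mono_set hsub
  rw [hswap, hRHS] at hLHS
  exact ENNReal.ofReal_ne_top hLHS.symm

lemma null_preimage_sub (c : ℝ) {N : Set ℝ} (hN : volume N = 0) :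
    volume ((fun x => c - x) ⁻¹' N) = 0 := by
  obtain ⟨M, hNM, hMmeas, hM0⟩ := exists_measurable_superset_of_null hN
  have h1 : volume ((fun x : ℝ => c - x) ⁻¹' M) = volume M :=
    (Measure.measurePreserving_sub_left volume c).measure_preimage hMmeas.nullMeasurableSet
  exact measure_mono_null (preimage_mono hNM) (h1.trans hM0)

lemma exists_measVersion {f : ℝ → ℝ} (hf : AEStronglyMeasurable f (volume.restrict (Ioi 0)))
    (hnn : ∀ x ∈ Ioi (0:ℝ), 0 ≤ f x) :
    ∃ f₀ : ℝ → ℝ, Measurable f₀ ∧ (∀ x, 0 ≤ f₀ x) ∧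
      volume {x | x ∈ Ioi (0:ℝ) ∧ f x ≠ f₀ x} = 0 := by
  refine ⟨fun x => max (hf.mk f x) 0, (hf.stronglyMeasurable_mk.measurable).max measurable_const,
    fun x => le_max_right _ _, ?_⟩
  have h1 : (volume.restrict (Ioi (0:ℝ))) {x | f x ≠ hf.mk f x} = 0 := hf.ae_eq_mk
  rw [Measure.restrict_apply' measurableSet_Ioi] at h1
  refine measure_mono_null ?_ h1
  rintro x ⟨hx1, hx2⟩
  refine ⟨fun hfx => hx2 ?_, hx1⟩
  show f x = max (hf.mk f x) 0
  rw [← hfx, max_eq_left (hnn x hx1)]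

/-- Laplace convolution on `(0, ∞)`: `(f ∗ g)(t) = ∫_0^t f(t−τ) g(τ) dτ`. -/
noncomputable def lconv (f g : ℝ → ℝ) (t : ℝ) : ℝ := ∫ τ in (0:ℝ)..t, f (t - τ) * g τ

/-- The pair `(k, l)` belongs to the class `PC`. -/
structure SoninePC (k l : ℝ → ℝ) : Prop where
  k_nonneg : ∀ t ∈ Ioi (0:ℝ), 0 ≤ k t
  k_anti : AntitoneOn k (Ioi 0)
  k_locInt : LocallyIntegrableOn k (Ioi 0)
  l_nonneg : ∀ t ∈ Ioi (0:ℝ), 0 ≤ l t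
  l_locInt : LocallyIntegrableOn l (Ioi 0)
  sonine : ∀ t ∈ Ioi (0:ℝ), lconv k l t = 1

theorem stmt_0 (k l : ℝ → ℝ) (hkl : SoninePC k l) (μ : ℝ) (hμ : 0 < μ)
    (s : ℝ → ℝ)
    (hs_nonneg : ∀ t ∈ Ioi (0:ℝ), 0 ≤ s t)
    (hs_anti : AntitoneOn s (Ioi 0))
    (hs_meas : Measurable s)
    (hs_locInt : LocallyIntegrableOn s (Ioi 0))
    (hvolt : ∀ t ∈ Ioi (0:ℝ), s t + μ * lconv l s t = 1) :
    ∀ᵐ t : ℝ, t ∈ Ioi (0:ℝ) →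
      k t / (k t + μ) ≤ s t ∧
      s t ≤ 1 / (1 + μ * ∫ τ in (0:ℝ)..t, l τ) ∧
      (0 < k t → 1 / (1 + μ * (k t)⁻¹) ≤ s t) := by
  obtain ⟨k₀, hk₀m, hk₀nn, hkN⟩ :=
    exists_measVersion hkl.k_locInt.aestronglyMeasurable hkl.k_nonneg
  obtain ⟨l₀, hl₀m, hl₀nn, hlN⟩ :=
    exists_measVersion hkl.l_locInt.aestronglyMeasurable hkl.l_nonneg
  -- a.e. equality facts
  have hkae : ∀ᵐ x : ℝ, x ∈ Ioi (0:ℝ) → k x = k₀ x := by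
    rw [ae_iff]
    refine measure_mono_null ?_ hkN
    intro x hx
    simp only [Set.mem_setOf_eq, not_forall] at hx
    exact ⟨hx.1, hx.2⟩
  have hlae : ∀ᵐ x : ℝ, x ∈ Ioi (0:ℝ) → l x = l₀ x := by
    rw [ae_iff]
    refine measure_mono_null ?_ hlN
    intro x hx
    simp only [Set.mem_setOf_eq, not_forall] at hx
    exact ⟨hx.1, hx.2⟩
  have hkaeR : ∀ c : ℝ, ∀ᵐ τ : ℝ, 0 < c - τ → k (c - τ) = k₀ (c - τ) := by
    intro c
    rw [ae_iff]
    refine measure_mono_null ?_ (null_preimage_sub c hkN)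
    intro x hx
    simp only [Set.mem_setOf_eq, not_forall] at hx
    exact ⟨hx.1, hx.2⟩
  have hlaeR : ∀ c : ℝ, ∀ᵐ τ : ℝ, 0 < c - τ → l (c - τ) = l₀ (c - τ) := by
    intro c
    rw [ae_iff]
    refine measure_mono_null ?_ (null_preimage_sub c hlN)
    intro x hx
    simp only [Set.mem_setOf_eq, not_forall] at hx
    exact ⟨hx.1, hx.2⟩
  set κ : ℝ → ℝ≥0∞ := fun x => ENNReal.ofReal (k₀ x) with hκ
  set lv : ℝ → ℝ≥0∞ := fun x => ENNReal.ofReal (l₀ x) with hlv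
  set w : ℝ → ℝ≥0∞ := fun x => ENNReal.ofReal (s x) with hw
  have hκm : Measurable κ := ENNReal.measurable_ofReal.comp hk₀m
  have hlvm : Measurable lv := ENNReal.measurable_ofReal.comp hl₀m
  have hwm : Measurable w := ENNReal.measurable_ofReal.comp hs_meas
  -- lconv over Ioo
  have hconv_eq : ∀ (f g : ℝ → ℝ) (t : ℝ), 0 ≤ t →
      lconv f g t = ∫ τ in Ioo 0 t, f (t - τ) * g τ := by
    intro f g t ht
    rw [lconv, intervalIntegral.integral_of_le ht, integral_Ioc_eq_integral_Ioo]
  -- s ≤ 1 on Ioi 0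
  have hs01 : ∀ t ∈ Ioi (0:ℝ), s t ≤ 1 := by
    intro t ht
    have h1 := hvolt t ht
    have h2 : 0 ≤ lconv l s t := by
      rw [hconv_eq l s t (le_of_lt ht)]
      refine setIntegral_nonneg measurableSet_Ioo fun τ hτ => ?_
      exact mul_nonneg (hkl.l_nonneg _ (mem_Ioi.2 (by linarith [hτ.2])))
        (hs_nonneg _ (mem_Ioi.2 hτ.1))
    nlinarith
  -- key lintegral identity (A)
  have hA : ∀ t : ℝ, 0 < t → ∫⁻ τ in Ioo 0 t, κ (t - τ) * lv τ = 1 := by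
    intro t ht
    have h1 := hkl.sonine t (mem_Ioi.2 ht)
    rw [hconv_eq k l t ht.le] at h1
    have hint : IntegrableOn (fun τ => k (t - τ) * l τ) (Ioo 0 t) := by
      by_contra hni
      rw [integral_undef hni] at h1
      norm_num at h1
    have hae : ∀ᵐ τ ∂(volume.restrict (Ioo (0:ℝ) t)),
        k (t - τ) * l τ = k₀ (t - τ) * l₀ τ := by
      filter_upwards [ae_restrict_of_ae (hkaeR t), ae_restrict_of_ae hlae,
        ae_restrict_mem measurableSet_Ioo] with τ h2 h3 h4
      rw [h2 (by linarith [h4.2]), h3 (mem_Ioi.2 h4.1)]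
    have hnn : 0 ≤ᵐ[volume.restrict (Ioo (0:ℝ) t)] fun τ => k (t - τ) * l τ := by
      filter_upwards [ae_restrict_mem measurableSet_Ioo] with τ h4
      exact mul_nonneg (hkl.k_nonneg _ (mem_Ioi.2 (by linarith [h4.2])))
        (hkl.l_nonneg _ (mem_Ioi.2 h4.1))
    have h2 := ofReal_integral_eq_lintegral_ofReal hint hnn
    rw [h1, ENNReal.ofReal_one] at h2
    refine Eq.trans ?_ h2.symm
    refine lintegral_congr_ae ?_
    filter_upwards [hae] with τ hτ
    rw [hτ, ENNReal.ofReal_mul (hk₀nn _)]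
  have hA' : ∀ t : ℝ, 0 < t → ∫⁻ τ in Ioo 0 t, lv (t - τ) * κ τ = 1 := by
    intro t ht
    have h0 := lint_reflect (fun y => κ (t - y) * lv y) t 0 t
    simp only [sub_zero, sub_self] at h0
    rw [← hA t ht, ← h0]
    refine setLIntegral_congr_fun measurableSet_Ioo ?_
    intro τ _
    have : t - (t - τ) = τ := by ring
    dsimp only
    rw [this, mul_comm]
  -- finiteness of primitives
  have hKfin : ∀ u : ℝ, 0 < u → ∫⁻ x in Ioo 0 u, κ x ≠ ⊤ := conv_finiteness κ lv hκm hlvm hA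
  have hLfin : ∀ u : ℝ, 0 < u → ∫⁻ x in Ioo 0 u, lv x ≠ ⊤ := conv_finiteness lv κ hlvm hκm hA'
  have hk₀int : ∀ u : ℝ, 0 < u → IntegrableOn k₀ (Ioo 0 u) := fun u hu =>
    integrableOn_of_lint hk₀m.aestronglyMeasurable
      (Filter.Eventually.of_forall hk₀nn) (hKfin u hu)
  have hl₀int : ∀ u : ℝ, 0 < u → IntegrableOn l₀ (Ioo 0 u) := fun u hu =>
    integrableOn_of_lint hl₀m.aestronglyMeasurable
      (Filter.Eventually.of_forall hl₀nn) (hLfin u hu)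
  -- interval conversion helpers
  have intIoo : ∀ (f : ℝ → ℝ) (x y : ℝ), x ≤ y →
      ∫ τ in x..y, f τ = ∫ τ in Ioo x y, f τ := by
    intro f x y hxy
    rw [intervalIntegral.integral_of_le hxy, integral_Ioc_eq_integral_Ioo]
  have iiIoo : ∀ (f : ℝ → ℝ) (x y : ℝ), x ≤ y →
      (IntervalIntegrable f volume x y ↔ IntegrableOn f (Ioo x y)) := fun f x y hxy =>
    intervalIntegrable_iff_integrableOn_Ioo_of_le hxy
  -- reflected integrability of k₀ and l₀
  have hrefl : ∀ (f₀ : ℝ → ℝ), (∀ u : ℝ, 0 < u → IntegrableOn f₀ (Ioo 0 u)) →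
      ∀ a b : ℝ, 0 < a → a ≤ b → IntegrableOn (fun τ => f₀ (b - τ)) (Ioo 0 a) := by
    intro f₀ hf₀ a b ha hab
    have hb : 0 < b := lt_of_lt_of_le ha hab
    have h1 : IntegrableOn f₀ (Ioo (b - a) b) :=
      (hf₀ b hb).mono_set (Ioo_subset_Ioo (by linarith) le_rfl)
    have h2 : IntervalIntegrable f₀ volume (b - a) b := (iiIoo _ _ _ (by linarith)).2 h1
    have h3 := h2.comp_sub_left b
    simp only [sub_self, sub_sub_cancel] at h3
    exact (iiIoo _ _ _ ha.le).1 h3.symm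
  have hk₀refl := hrefl k₀ hk₀int
  have hl₀refl := hrefl l₀ hl₀int
  -- integrand of G is integrable
  have hGint : ∀ a b : ℝ, 0 < a → a ≤ b →
      IntegrableOn (fun τ => k₀ (b - τ) * (1 - s τ)) (Ioo 0 a) := by
    intro a b ha hab
    refine Integrable.mono (hk₀refl a b ha hab) ?_ ?_
    · exact ((hk₀m.comp (measurable_const.sub measurable_id)).mul
        (measurable_const.sub hs_meas)).aestronglyMeasurable
    · filter_upwards [ae_restrict_mem measurableSet_Ioo] with τ hτ
      have h1 : 0 ≤ s τ := hs_nonneg _ (mem_Ioi.2 hτ.1)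
      have h2 : s τ ≤ 1 := hs01 _ (mem_Ioi.2 hτ.1)
      have h3 : |1 - s τ| ≤ 1 := abs_le.2 ⟨by linarith, by linarith⟩
      calc ‖k₀ (b - τ) * (1 - s τ)‖ = |k₀ (b - τ)| * |1 - s τ| := by
            rw [Real.norm_eq_abs, abs_mul]
        _ ≤ |k₀ (b - τ)| * 1 := mul_le_mul_of_nonneg_left h3 (abs_nonneg _)
        _ = ‖k₀ (b - τ)‖ := by rw [mul_one, Real.norm_eq_abs]
  -- the convolution l * s has integrable integrand
  have hlrefl_int : ∀ τ : ℝ, 0 < τ → IntegrableOn (fun σ => l (τ - σ)) (Ioo 0 τ) := by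
    intro τ hτ
    refine (hl₀refl τ τ hτ le_rfl).congr ?_
    filter_upwards [ae_restrict_of_ae (hlaeR τ), ae_restrict_mem measurableSet_Ioo]
      with σ h1 h2
    exact (h1 (by linarith [h2.2])).symm
  have hlsint : ∀ τ : ℝ, 0 < τ → IntegrableOn (fun σ => l (τ - σ) * s σ) (Ioo 0 τ) := by
    intro τ hτ
    refine Integrable.mono (hl₀refl τ τ hτ le_rfl) ?_ ?_
    · have hm : AEStronglyMeasurable (fun σ => l₀ (τ - σ) * s σ)
          (volume.restrict (Ioo 0 τ)) :=
        ((hl₀m.comp (measurable_const.sub measurable_id)).mul hs_meas).aestronglyMeasurable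
      refine hm.congr ?_
      filter_upwards [ae_restrict_of_ae (hlaeR τ), ae_restrict_mem measurableSet_Ioo]
        with σ h1 h2
      rw [h1 (by linarith [h2.2])]
    · filter_upwards [ae_restrict_of_ae (hlaeR τ), ae_restrict_mem measurableSet_Ioo]
        with σ h1 h2
      have h3 : l (τ - σ) = l₀ (τ - σ) := h1 (by linarith [h2.2])
      have h4 : 0 ≤ s σ := hs_nonneg _ (mem_Ioi.2 h2.1)
      have h5 : s σ ≤ 1 := hs01 _ (mem_Ioi.2 h2.1)
      calc ‖l (τ - σ) * s σ‖ = |l₀ (τ - σ)| * |s σ| := by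
            rw [Real.norm_eq_abs, abs_mul, h3]
        _ ≤ |l₀ (τ - σ)| * 1 := mul_le_mul_of_nonneg_left
            (abs_le.2 ⟨by linarith, h5⟩) (abs_nonneg _)
        _ = ‖l₀ (τ - σ)‖ := by rw [mul_one, Real.norm_eq_abs]
  -- identity (B)
  have hB : ∀ τ : ℝ, 0 < τ → ENNReal.ofReal (1 - s τ)
      = ENNReal.ofReal μ * ∫⁻ σ in Ioo 0 τ, lv (τ - σ) * w σ := by
    intro τ hτ
    have h1 := hvolt τ (mem_Ioi.2 hτ)
    have h2 : lconv l s τ = ∫ σ in Ioo 0 τ, l (τ - σ) * s σ := hconv_eq l s τ hτ.le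
    have hnn : 0 ≤ᵐ[volume.restrict (Ioo (0:ℝ) τ)] fun σ => l (τ - σ) * s σ := by
      filter_upwards [ae_restrict_mem measurableSet_Ioo] with σ h4
      exact mul_nonneg (hkl.l_nonneg _ (mem_Ioi.2 (by linarith [h4.2])))
        (hs_nonneg _ (mem_Ioi.2 h4.1))
    have h3 : ENNReal.ofReal (lconv l s τ) = ∫⁻ σ in Ioo 0 τ, lv (τ - σ) * w σ := by
      rw [h2, ofReal_integral_eq_lintegral_ofReal (hlsint τ hτ) hnn]
      refine lintegral_congr_ae ?_
      filter_upwards [ae_restrict_of_ae (hlaeR τ), ae_restrict_mem measurableSet_Ioo]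
        with σ h5 h6
      rw [h5 (by linarith [h6.2]), ENNReal.ofReal_mul (hl₀nn _)]
    have h4 : 1 - s τ = μ * lconv l s τ := by linarith
    rw [h4, ENNReal.ofReal_mul hμ.le, h3]
  have hsint : ∀ c : ℝ, 0 < c → IntegrableOn s (Ioo 0 c) := by
    intro c hc
    refine Integrable.mono
      (show IntegrableOn (fun _ => (1:ℝ)) (Ioo 0 c) volume from
        integrableOn_const (by rw [Real.volume_Ioo]; exact ENNReal.ofReal_ne_top))
      hs_meas.aestronglyMeasurable ?_
    filter_upwards [ae_restrict_mem measurableSet_Ioo] with τ hτ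
    rw [Real.norm_eq_abs, abs_of_nonneg (hs_nonneg _ (mem_Ioi.2 hτ.1))]
    calc s τ ≤ 1 := hs01 _ (mem_Ioi.2 hτ.1)
      _ ≤ ‖(1:ℝ)‖ := by norm_num
  have hGid : ∀ c : ℝ, 0 < c →
      ∫ τ in Ioo 0 c, k₀ (c - τ) * (1 - s τ) = μ * ∫ τ in Ioo 0 c, s τ := by
    intro c hc
    have hfm : Measurable (fun τ => ENNReal.ofReal μ * κ (c - τ)) :=
      measurable_const.mul (hκm.comp (measurable_const.sub measurable_id))
    have hswap := swap_inner (fun τ => ENNReal.ofReal μ * κ (c - τ)) lv w hfm hlvm hwm c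
    have hX1 : ∫⁻ τ in Ioo 0 c, κ (c - τ) * ENNReal.ofReal (1 - s τ)
        = ∫⁻ τ in Ioo 0 c, (ENNReal.ofReal μ * κ (c - τ)) * ∫⁻ σ in Ioo 0 τ, lv (τ - σ) * w σ := by
      refine setLIntegral_congr_fun measurableSet_Ioo ?_
      intro τ hτ
      dsimp only
      rw [hB τ hτ.1, ← mul_assoc, mul_comm (κ (c - τ)) (ENNReal.ofReal μ)]
    have hinner : ∀ σ ∈ Ioo (0:ℝ) c,
        ∫⁻ τ in Ioo σ c, (ENNReal.ofReal μ * κ (c - τ)) * lv (τ - σ) = ENNReal.ofReal μ := by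
      intro σ hσ
      have h4 : ∀ τ : ℝ, (ENNReal.ofReal μ * κ (c - τ)) * lv (τ - σ)
          = ENNReal.ofReal μ * (κ (c - τ) * lv (τ - σ)) := fun τ => mul_assoc _ _ _
      simp_rw [h4]
      rw [lintegral_const_mul _ (show Measurable fun τ : ℝ => κ (c - τ) * lv (τ - σ) from
        (hκm.comp (measurable_const.sub measurable_id)).mul
        (hlvm.comp (measurable_id.sub measurable_const)))]
      have h5 : ∫⁻ τ in Ioo σ c, κ (c - τ) * lv (τ - σ)
          = ∫⁻ x in Ioo 0 (c - σ), κ (c - σ - x) * lv x := by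
        have h6 := lint_translate (fun x => κ (c - σ - x) * lv x) σ σ c
        simp only [sub_self] at h6
        rw [← h6]
        refine setLIntegral_congr_fun measurableSet_Ioo ?_
        intro τ _
        have h7 : c - σ - (τ - σ) = c - τ := by ring
        dsimp only
        rw [h7]
      rw [h5, hA (c - σ) (by linarith [hσ.2]), mul_one]
    have hchain : ∫⁻ τ in Ioo 0 c, κ (c - τ) * ENNReal.ofReal (1 - s τ)
        = ENNReal.ofReal μ * ∫⁻ τ in Ioo 0 c, w τ := by
      rw [hX1, hswap]
      have h7 : ∫⁻ σ in Ioo 0 c, w σ *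
            ∫⁻ τ in Ioo σ c, (ENNReal.ofReal μ * κ (c - τ)) * lv (τ - σ)
          = ∫⁻ σ in Ioo 0 c, w σ * ENNReal.ofReal μ := by
        refine setLIntegral_congr_fun measurableSet_Ioo ?_
        intro σ hσ
        dsimp only
        rw [hinner σ hσ]
      rw [h7, lintegral_mul_const _ hwm, mul_comm]
    have hnnG : 0 ≤ᵐ[volume.restrict (Ioo (0:ℝ) c)] fun τ => k₀ (c - τ) * (1 - s τ) := by
      filter_upwards [ae_restrict_mem measurableSet_Ioo] with τ hτ
      exact mul_nonneg (hk₀nn _) (by linarith [hs01 τ (mem_Ioi.2 hτ.1)])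
    have h6 : ENNReal.ofReal (∫ τ in Ioo 0 c, k₀ (c - τ) * (1 - s τ))
        = ∫⁻ τ in Ioo 0 c, κ (c - τ) * ENNReal.ofReal (1 - s τ) := by
      rw [ofReal_integral_eq_lintegral_ofReal (hGint c c hc le_rfl) hnnG]
      refine lintegral_congr_ae (Filter.Eventually.of_forall fun τ => ?_)
      show ENNReal.ofReal (k₀ (c - τ) * (1 - s τ)) = κ (c - τ) * ENNReal.ofReal (1 - s τ)
      rw [ENNReal.ofReal_mul (hk₀nn _)]
    have hnns : 0 ≤ᵐ[volume.restrict (Ioo (0:ℝ) c)] s := by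
      filter_upwards [ae_restrict_mem measurableSet_Ioo] with τ hτ
      exact hs_nonneg _ (mem_Ioi.2 hτ.1)
    have h7 : ENNReal.ofReal (μ * ∫ τ in Ioo 0 c, s τ)
        = ENNReal.ofReal μ * ∫⁻ τ in Ioo 0 c, w τ := by
      rw [ENNReal.ofReal_mul hμ.le, ofReal_integral_eq_lintegral_ofReal (hsint c hc) hnns]
    have h8 : ENNReal.ofReal (∫ τ in Ioo 0 c, k₀ (c - τ) * (1 - s τ))
        = ENNReal.ofReal (μ * ∫ τ in Ioo 0 c, s τ) := by rw [h6, h7, hchain]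
    refine (ENNReal.ofReal_eq_ofReal_iff ?_ ?_).1 h8
    · exact integral_nonneg_of_ae hnnG
    · exact mul_nonneg hμ.le (integral_nonneg_of_ae hnns)
  have h2pt : ∀ a b : ℝ, 0 < a → a < b → (1 - s a) * k b ≤ μ * s a := by
    intro a b ha hab
    have hb : 0 < b := lt_trans ha hab
    have hba : 0 < b - a := by linarith
    have hsa1 : s a ≤ 1 := hs01 a (mem_Ioi.2 ha)
    have hsa0 : 0 ≤ s a := hs_nonneg a (mem_Ioi.2 ha)
    have hkb0 : 0 ≤ k b := hkl.k_nonneg b (mem_Ioi.2 hb)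
    have hFb_full : IntegrableOn (fun τ => k₀ (b - τ) * (1 - s τ)) (Ioo 0 b) :=
      hGint b b hb le_rfl
    have hFb_a : IntegrableOn (fun τ => k₀ (b - τ) * (1 - s τ)) (Ioo 0 a) :=
      hGint a b ha hab.le
    have hFb_ab : IntegrableOn (fun τ => k₀ (b - τ) * (1 - s τ)) (Ioo a b) :=
      hFb_full.mono_set (Ioo_subset_Ioo ha.le le_rfl)
    have hsplit : ∫ τ in Ioo 0 b, k₀ (b - τ) * (1 - s τ)
        = (∫ τ in Ioo 0 a, k₀ (b - τ) * (1 - s τ))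
          + ∫ τ in Ioo a b, k₀ (b - τ) * (1 - s τ) := by
      rw [← intIoo _ 0 b hb.le, ← intIoo _ 0 a ha.le, ← intIoo _ a b hab.le]
      rw [← intervalIntegral.integral_add_adjacent_intervals
        ((iiIoo _ 0 a ha.le).2 hFb_a) ((iiIoo _ a b hab.le).2 hFb_ab)]
    have hKab : (b - a) * k b ≤ ∫ τ in Ioo a b, k₀ τ := by
      have h1 : IntegrableOn k₀ (Ioo a b) :=
        (hk₀int b hb).mono_set (Ioo_subset_Ioo ha.le le_rfl)
      have h2 : IntegrableOn (fun _ : ℝ => k b) (Ioo a b) :=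
        integrableOn_const (by rw [Real.volume_Ioo]; exact ENNReal.ofReal_ne_top)
      have h3 := setIntegral_mono_on_ae h2 h1 measurableSet_Ioo (by
        filter_upwards [hkae] with τ h4 hτ
        rw [← h4 (mem_Ioi.2 (lt_trans ha hτ.1))]
        exact hkl.k_anti (mem_Ioi.2 (lt_trans ha hτ.1)) (mem_Ioi.2 hb) hτ.2.le)
      calc (b - a) * k b = ∫ _ in Ioo a b, k b := by
            rw [setIntegral_const, Real.volume_real_Ioo_of_le hab.le, smul_eq_mul]
        _ ≤ _ := h3
    have hT2 : (1 - s a) * ∫ x in Ioo 0 (b - a), k₀ x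
        ≤ ∫ τ in Ioo a b, k₀ (b - τ) * (1 - s τ) := by
      have e1 : ∫ τ in Ioo a b, k₀ (b - τ) = ∫ x in Ioo 0 (b - a), k₀ x := by
        rw [← intIoo _ a b hab.le, ← intIoo _ 0 (b - a) hba.le]
        have h0 := intervalIntegral.integral_comp_sub_left (a := a) (b := b) k₀ b
        simpa using h0
      have h1 : IntegrableOn (fun τ => (1 - s a) * k₀ (b - τ)) (Ioo a b) :=
        (((hk₀refl b b hb le_rfl).mono_set (Ioo_subset_Ioo ha.le le_rfl))).const_mul _
      calc (1 - s a) * ∫ x in Ioo 0 (b - a), k₀ x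
          = ∫ τ in Ioo a b, (1 - s a) * k₀ (b - τ) := by rw [← e1, integral_const_mul]
        _ ≤ ∫ τ in Ioo a b, k₀ (b - τ) * (1 - s τ) := by
            refine setIntegral_mono_on h1 hFb_ab measurableSet_Ioo fun τ hτ => ?_
            have hsτ : s τ ≤ s a :=
              hs_anti (mem_Ioi.2 ha) (mem_Ioi.2 (lt_trans ha hτ.1)) hτ.1.le
            rw [mul_comm]
            exact mul_le_mul_of_nonneg_left (by linarith) (hk₀nn _)
    have hia : IntegrableOn (fun τ => k₀ (a - τ)) (Ioo 0 a) := hk₀refl a a ha le_rfl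
    have hib : IntegrableOn (fun τ => k₀ (b - τ)) (Ioo 0 a) := hk₀refl a b ha hab.le
    have hFa : IntegrableOn (fun τ => k₀ (a - τ) * (1 - s τ)) (Ioo 0 a) := hGint a a ha le_rfl
    have hT1 : (∫ τ in Ioo 0 a, k₀ (a - τ) * (1 - s τ))
        - (1 - s a) * ((∫ τ in Ioo 0 a, k₀ (a - τ)) - ∫ τ in Ioo 0 a, k₀ (b - τ))
        ≤ ∫ τ in Ioo 0 a, k₀ (b - τ) * (1 - s τ) := by
      have hsubint : IntegrableOn (fun τ => (1 - s a) * (k₀ (a - τ) - k₀ (b - τ)))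
          (Ioo 0 a) := by
        exact (hia.sub hib).const_mul _
      have hlhs_int : IntegrableOn (fun τ => k₀ (a - τ) * (1 - s τ)
          - (1 - s a) * (k₀ (a - τ) - k₀ (b - τ))) (Ioo 0 a) := by
        exact hFa.sub hsubint
      have hmono := setIntegral_mono_on_ae hlhs_int hFb_a measurableSet_Ioo (by
        filter_upwards [hkaeR a, hkaeR b] with τ h1 h2 hτ
        have hka : k (a - τ) = k₀ (a - τ) := h1 (by linarith [hτ.2])
        have hkb : k (b - τ) = k₀ (b - τ) := h2 (by linarith [hτ.2])
        have hdd : k₀ (b - τ) ≤ k₀ (a - τ) := by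
          rw [← hka, ← hkb]
          exact hkl.k_anti (mem_Ioi.2 (by linarith [hτ.2]))
            (mem_Ioi.2 (by linarith [hτ.2])) (by linarith)
        have hsτ : s a ≤ s τ :=
          hs_anti (mem_Ioi.2 hτ.1) (mem_Ioi.2 ha) hτ.2.le
        nlinarith [mul_nonneg (sub_nonneg.2 hdd) (sub_nonneg.2 hsτ)])
      rw [integral_sub hFa hsubint, integral_const_mul, integral_sub hia hib] at hmono
      exact hmono
    have e2 : ∫ τ in Ioo 0 a, k₀ (b - τ)
        = (∫ x in Ioo 0 b, k₀ x) - ∫ x in Ioo 0 (b - a), k₀ x := by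
      have e3 : ∫ τ in Ioo 0 a, k₀ (b - τ) = ∫ x in Ioo (b - a) b, k₀ x := by
        rw [← intIoo _ 0 a ha.le, ← intIoo _ (b - a) b (by linarith)]
        have h0 := intervalIntegral.integral_comp_sub_left (a := 0) (b := a) k₀ b
        simpa using h0
      rw [e3, ← intIoo _ (b - a) b (by linarith), ← intIoo _ 0 b hb.le,
        ← intIoo _ 0 (b - a) hba.le]
      have h1 := intervalIntegral.integral_add_adjacent_intervals
        ((iiIoo k₀ 0 (b - a) hba.le).2 (hk₀int (b - a) hba))
        ((iiIoo k₀ (b - a) b (by linarith)).2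
          ((hk₀int b hb).mono_set (Ioo_subset_Ioo hba.le le_rfl)))
      linarith [h1]
    have e4 : ∫ τ in Ioo 0 a, k₀ (a - τ) = ∫ x in Ioo 0 a, k₀ x := by
      rw [← intIoo _ 0 a ha.le, ← intIoo _ 0 a ha.le]
      have h0 := intervalIntegral.integral_comp_sub_left (a := 0) (b := a) k₀ a
      simpa using h0
    have hKvsplit : (∫ x in Ioo 0 b, k₀ x) - (∫ x in Ioo 0 a, k₀ x) = ∫ x in Ioo a b, k₀ x := by
      rw [← intIoo _ 0 b hb.le, ← intIoo _ 0 a ha.le, ← intIoo _ a b hab.le]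
      have h1 := intervalIntegral.integral_add_adjacent_intervals
        ((iiIoo k₀ 0 a ha.le).2 (hk₀int a ha))
        ((iiIoo k₀ a b hab.le).2 ((hk₀int b hb).mono_set (Ioo_subset_Ioo ha.le le_rfl)))
      linarith [h1]
    have hsadd : ∫ τ in Ioo 0 b, s τ = (∫ τ in Ioo 0 a, s τ) + ∫ τ in Ioo a b, s τ := by
      rw [← intIoo _ 0 b hb.le, ← intIoo _ 0 a ha.le, ← intIoo _ a b hab.le]
      rw [← intervalIntegral.integral_add_adjacent_intervals
        ((iiIoo s 0 a ha.le).2 (hsint a ha))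
        ((iiIoo s a b hab.le).2 ((hsint b hb).mono_set (Ioo_subset_Ioo ha.le le_rfl)))]
    have hsbound : ∫ τ in Ioo a b, s τ ≤ (b - a) * s a := by
      have h2 : IntegrableOn (fun _ : ℝ => s a) (Ioo a b) :=
        integrableOn_const (by rw [Real.volume_Ioo]; exact ENNReal.ofReal_ne_top)
      calc ∫ τ in Ioo a b, s τ ≤ ∫ _ in Ioo a b, s a := by
            refine setIntegral_mono_on
              ((hsint b hb).mono_set (Ioo_subset_Ioo ha.le le_rfl)) h2 measurableSet_Ioo
              fun τ hτ => hs_anti (mem_Ioi.2 ha) (mem_Ioi.2 (lt_trans ha hτ.1)) hτ.1.le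
        _ = (b - a) * s a := by
            rw [setIntegral_const, Real.volume_real_Ioo_of_le hab.le, smul_eq_mul]
    have hGa := hGid a ha
    have hGb := hGid b hb
    rw [e4, e2] at hT1
    have hring : -((1 - s a) * ((∫ x in Ioo 0 a, k₀ x)
          - ((∫ x in Ioo 0 b, k₀ x) - ∫ x in Ioo 0 (b - a), k₀ x)))
        + (1 - s a) * (∫ x in Ioo 0 (b - a), k₀ x)
        = (1 - s a) * ((∫ x in Ioo 0 b, k₀ x) - ∫ x in Ioo 0 a, k₀ x) := by ring
    rw [hKvsplit] at hring
    have hμS : μ * (∫ τ in Ioo 0 b, s τ)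
        = μ * (∫ τ in Ioo 0 a, s τ) + μ * ∫ τ in Ioo a b, s τ := by
      rw [hsadd]; ring
    have h1 : (1 - s a) * (∫ x in Ioo a b, k₀ x) ≤ μ * ∫ τ in Ioo a b, s τ := by
      linarith [hT1, hT2, hsplit, hGa, hGb, hμS, hring]
    have h2 : (1 - s a) * ((b - a) * k b) ≤ (1 - s a) * ∫ x in Ioo a b, k₀ x :=
      mul_le_mul_of_nonneg_left hKab (by linarith)
    have h3 : μ * (∫ τ in Ioo a b, s τ) ≤ μ * ((b - a) * s a) :=
      mul_le_mul_of_nonneg_left hsbound hμ.le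
    have key : ((1 - s a) * k b) * (b - a) ≤ (μ * s a) * (b - a) := by nlinarith
    exact le_of_mul_le_mul_right key hba
  have hrt : ∃ C : Set ℝ, C.Countable ∧ ∀ t ∈ Ioi (0:ℝ), t ∉ C →
      Filter.Tendsto k (nhdsWithin t (Ioi t)) (nhds (k t)) := by
    have hanti : ∀ n : ℕ, Antitone (fun x : ℝ => k (max x (1 / (n + 1)))) := by
      intro n x y hxy
      have hc : (0:ℝ) < 1 / (n + 1) := by positivity
      exact hkl.k_anti (mem_Ioi.2 (lt_of_lt_of_le hc (le_max_right _ _)))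
        (mem_Ioi.2 (lt_of_lt_of_le hc (le_max_right _ _)))
        (max_le_max hxy le_rfl)
    refine ⟨⋃ n : ℕ, {x | ¬ContinuousAt (fun x : ℝ => k (max x (1 / (n + 1)))) x},
      countable_iUnion fun n => (hanti n).countable_not_continuousAt, ?_⟩
    intro t ht htC
    obtain ⟨n, hn⟩ := exists_nat_one_div_lt (mem_Ioi.1 ht)
    have hcont : ContinuousAt (fun x : ℝ => k (max x (1 / (n + 1)))) t := by
      by_contra hc
      exact htC (mem_iUnion.2 ⟨n, hc⟩)
    have h1 : Filter.Tendsto (fun x : ℝ => k (max x (1 / (n + 1)))) (nhdsWithin t (Ioi t))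
        (nhds (k t)) := by
      have h2 : k (max t (1 / (n + 1))) = k t := by rw [max_eq_left hn.le]
      have h3 := hcont.tendsto.mono_left (nhdsWithin_le_nhds (s := Ioi t))
      rwa [h2] at h3
    refine h1.congr' ?_
    filter_upwards [self_mem_nhdsWithin] with b hb
    rw [max_eq_left (le_of_lt (lt_trans hn hb))]
  obtain ⟨C, hCc, hCt⟩ := hrt
  filter_upwards [hCc.ae_notMem volume] with t htC ht
  have htpos : (0:ℝ) < t := mem_Ioi.1 ht
  have hklim := hCt t ht htC
  have hbnd : ∀ b ∈ Ioi t, (1 - s t) * k b ≤ μ * s t := fun b hb => h2pt t b htpos hb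
  have h3 : (1 - s t) * k t ≤ μ * s t := by
    have h4 : Filter.Tendsto (fun b => (1 - s t) * k b) (nhdsWithin t (Ioi t))
        (nhds ((1 - s t) * k t)) := tendsto_const_nhds.mul hklim
    exact le_of_tendsto h4 (eventually_nhdsWithin_of_forall hbnd)
  have hk0 : 0 ≤ k t := hkl.k_nonneg t ht
  have hden : 0 < k t + μ := by linarith
  have hst0 : 0 ≤ s t := hs_nonneg t ht
  have hst1 : s t ≤ 1 := hs01 t ht
  have hlow : k t / (k t + μ) ≤ s t := by
    rw [div_le_iff₀ hden]
    nlinarith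
  refine ⟨hlow, ?_, ?_⟩
  · have hLeq : ∫ τ in (0:ℝ)..t, l τ = ∫ τ in Ioo 0 t, l τ := intIoo l 0 t htpos.le
    have hLnn : 0 ≤ ∫ τ in Ioo 0 t, l τ :=
      setIntegral_nonneg measurableSet_Ioo fun τ hτ => hkl.l_nonneg τ (mem_Ioi.2 hτ.1)
    have hlreflint : IntegrableOn (fun τ => l (t - τ)) (Ioo 0 t) := hlrefl_int t htpos
    have hrefl_eval : ∫ τ in Ioo 0 t, l (t - τ) = ∫ τ in Ioo 0 t, l τ := by
      rw [← intIoo _ 0 t htpos.le, ← intIoo l 0 t htpos.le]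
      have h0 := intervalIntegral.integral_comp_sub_left (a := 0) (b := t) l t
      simpa using h0
    have hmono2 : s t * ∫ τ in Ioo 0 t, l τ ≤ ∫ τ in Ioo 0 t, l (t - τ) * s τ := by
      calc s t * ∫ τ in Ioo 0 t, l τ = ∫ τ in Ioo 0 t, s t * l (t - τ) := by
            rw [integral_const_mul, hrefl_eval]
        _ ≤ ∫ τ in Ioo 0 t, l (t - τ) * s τ := by
            refine setIntegral_mono_on (hlreflint.const_mul _) (hlsint t htpos)
              measurableSet_Ioo fun τ hτ => ?_
            have h5 : s t ≤ s τ := hs_anti (mem_Ioi.2 hτ.1) ht hτ.2.le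
            have h6 : 0 ≤ l (t - τ) := hkl.l_nonneg _ (mem_Ioi.2 (by linarith [hτ.2]))
            calc s t * l (t - τ) = l (t - τ) * s t := mul_comm _ _
              _ ≤ l (t - τ) * s τ := mul_le_mul_of_nonneg_left h5 h6
    have hv := hvolt t ht
    rw [hconv_eq l s t htpos.le] at hv
    have hden2 : 0 < 1 + μ * ∫ τ in (0:ℝ)..t, l τ := by
      rw [hLeq]; nlinarith
    rw [le_div_iff₀ hden2, hLeq]
    have h9 := mul_le_mul_of_nonneg_left hmono2 hμ.le
    nlinarith [h9, hv]
  · intro hkt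
    have heq : 1 / (1 + μ * (k t)⁻¹) = k t / (k t + μ) := by
      rw [div_eq_div_iff (by positivity) hden.ne']
      field_simp
    rw [heq]
    exact hlow
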